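/- arXiv:math/0501438 — 3 statements merged into one kernel-verified Lean document; each statement's English description precedes it below -/
import Mathlib

section
/- Let L be a lattice containing elements o, a, b, c, i that form a sublattice isomorphic to M₃ (i.e., a, b, c are pairwise distinct, the meet of any two distinct elements of {a,b,c} is o, and the join of any two distinct elements of {a,b,c} is i, with o < a, b, c < i). Then the five triples (o,o,a), (o,c,a), (c,c,i), (i,i,i), (b,o,a) are Boolean triples and they form a sublattice of M̂(L) isomorphic to N₅: (o,o,a) < (o,c,a) < (c,c,i) < (i,i,i), (o,o,a) < (b,o,a) < (i,i,i), the componentwise meet of (c,c,i) and (b,o,a) is (o,o,a), and the join in M̂(L) of (o,c,a) and (b,o,a) is (i,i,i). -/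
/-- A triple `(x, y, z)` in a lattice is *Boolean* if `x = (x ⊔ y) ⊓ (x ⊔ z)`,
`y = (y ⊔ x) ⊓ (y ⊔ z)`, and `z = (z ⊔ x) ⊓ (z ⊔ y)`. -/
def IsBoolean {L : Type*} [Lattice L] (t : L × L × L) : Prop :=
  t.1 = (t.1 ⊔ t.2.1) ⊓ (t.1 ⊔ t.2.2) ∧
  t.2.1 = (t.2.1 ⊔ t.1) ⊓ (t.2.1 ⊔ t.2.2) ∧
  t.2.2 = (t.2.2 ⊔ t.1) ⊓ (t.2.2 ⊔ t.2.1)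

/-- The *Boolean closure* of a triple `(x, y, z)`:
`((x ⊔ y) ⊓ (x ⊔ z), (y ⊔ x) ⊓ (y ⊔ z), (z ⊔ x) ⊓ (z ⊔ y))`. -/
def bClosure {L : Type*} [Lattice L] (t : L × L × L) : L × L × L :=
  ((t.1 ⊔ t.2.1) ⊓ (t.1 ⊔ t.2.2),
   (t.2.1 ⊔ t.1) ⊓ (t.2.1 ⊔ t.2.2),
   (t.2.2 ⊔ t.1) ⊓ (t.2.2 ⊔ t.2.1))

/-- If `o, a, b, c, i` form a copy of `M₃` in `L`, then the triples `(o,o,a)`,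
`(o,c,a)`, `(c,c,i)`, `(i,i,i)`, `(b,o,a)` are Boolean and form a copy of `N₅`
in `M̂(L)`. -/
theorem N5_in_boolTriples_of_M3 {L : Type*} [Lattice L] (o a b c i : L)
    (hab : a ≠ b) (hac : a ≠ c) (hbc : b ≠ c)
    (hmab : a ⊓ b = o) (hmac : a ⊓ c = o) (hmbc : b ⊓ c = o)
    (hjab : a ⊔ b = i) (hjac : a ⊔ c = i) (hjbc : b ⊔ c = i)
    (hoa : o < a) (hob : o < b) (hoc : o < c)
    (hai : a < i) (hbi : b < i) (hci : c < i) :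
    IsBoolean ((o, o, a) : L × L × L) ∧
    IsBoolean ((o, c, a) : L × L × L) ∧
    IsBoolean ((c, c, i) : L × L × L) ∧
    IsBoolean ((i, i, i) : L × L × L) ∧
    IsBoolean ((b, o, a) : L × L × L) ∧
    (((o, o, a) : L × L × L) < (o, c, a)) ∧
    (((o, c, a) : L × L × L) < (c, c, i)) ∧
    (((c, c, i) : L × L × L) < (i, i, i)) ∧
    (((o, o, a) : L × L × L) < (b, o, a)) ∧
    (((b, o, a) : L × L × L) < (i, i, i)) ∧
    (((c, c, i) : L × L × L) ⊓ (b, o, a) = (o, o, a)) ∧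
    (bClosure (((o, c, a) : L × L × L) ⊔ (b, o, a)) = (i, i, i)) := by

  have hoa' := hoa.le; have hob' := hob.le; have hoc' := hoc.le
  have hai' := hai.le; have hbi' := hbi.le; have hci' := hci.le
  have hoi : o ≤ i := hoa'.trans hai'
  refine ⟨⟨?_, ?_, ?_⟩, ⟨?_, ?_, ?_⟩, ⟨?_, ?_, ?_⟩, ⟨?_, ?_, ?_⟩, ⟨?_, ?_, ?_⟩,
    ?_, ?_, ?_, ?_, ?_, ?_, ?_⟩ <;>
    simp only [IsBoolean, bClosure, Prod.mk_lt_mk, Prod.mk.injEq, Prod.lt_iff,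
      Prod.mk_le_mk, Prod.inf_def, Prod.sup_def, inf_idem, sup_idem,
      sup_of_le_right, sup_of_le_left, inf_of_le_left, inf_of_le_right,
      hoa', hob', hoc', hai', hbi', hci'] <;>
    simp_all [sup_comm, inf_comm, le_refl, lt_irrefl] <;>
    first
    | exact Or.inl hoi
    | (rw [sup_comm b o, sup_of_le_right hob', hmab]; exact inf_comm a b ▸ rfl)
    | skip
end

section
/- Let D be a distributive lattice. A triple (x, y, z) ∈ D³ satisfies x ⊓ y = y ⊓ z = z ⊓ x if and only if it is a Boolean triple. Consequently, for distributive D the poset M₃[D] of triples satisfying x ⊓ y = y ⊓ z = z ⊓ x coincides with the lattice M̂(D) of Boolean triples. -/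
lemma key {D : Type*} [DistribLattice D] (x y z : D) :
    (x ⊓ y = y ⊓ z ∧ y ⊓ z = z ⊓ x) ↔ IsBoolean ((x, y, z) : D × D × D) := by
  constructor
  · rintro ⟨h1, h2⟩
    refine ⟨?_, ?_, ?_⟩ <;> simp only
    · rw [← sup_inf_left, ← h1, sup_eq_left.2 inf_le_left]
    · rw [← sup_inf_left, inf_comm x z, ← h2, sup_eq_left.2 inf_le_left]
    · rw [← sup_inf_left, h1, sup_eq_left.2 inf_le_right]
  · rintro ⟨h1, h2, h3⟩
    simp only [← sup_inf_left] at h1 h2 h3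
    have hyz : y ⊓ z ≤ x := le_sup_right.trans_eq h1.symm
    have hxz : x ⊓ z ≤ y := le_sup_right.trans_eq h2.symm
    have hxy : x ⊓ y ≤ z := le_sup_right.trans_eq h3.symm
    have e1 : x ⊓ y ⊓ z = x ⊓ y := inf_eq_left.2 hxy
    have e2 : y ⊓ z ⊓ x = y ⊓ z := inf_eq_left.2 hyz
    have e3 : z ⊓ x ⊓ y = z ⊓ x := inf_eq_left.2 (inf_comm x z ▸ hxz)
    constructor
    · rw [← e1, ← e2]; ac_rfl
    · rw [← e2, ← e3]; ac_rfl

/-- In a distributive lattice, a triple satisfies `x ⊓ y = y ⊓ z = z ⊓ x` iff it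
is Boolean; hence `M₃[D]` coincides with `M̂(D)` for distributive `D`. -/
theorem M3D_eq_boolTriples (D : Type*) [DistribLattice D] :
    (∀ x y z : D,
      (x ⊓ y = y ⊓ z ∧ y ⊓ z = z ⊓ x) ↔ IsBoolean ((x, y, z) : D × D × D)) ∧
    {t : D × D × D | t.1 ⊓ t.2.1 = t.2.1 ⊓ t.2.2 ∧ t.2.1 ⊓ t.2.2 = t.2.2 ⊓ t.1} =
      {t : D × D × D | IsBoolean t} := by
  refine ⟨key, ?_⟩
  ext ⟨x, y, z⟩
  exact key x y z
end

section
/- Every Dedekind domain R with more than one element (i.e., nontrivial) has a proper ideal-preserving extension that is a principal ideal domain; that is, there exist a principal ideal domain S and an injective, non-surjective ring homomorphism f : R → S such that the map J ↦ f⁻¹(J) is a bijection from the set of ideals of S onto the set of ideals of R. -/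
open Polynomial nonZeroDivisors

universe u

namespace NagataPID

variable {R : Type u} [CommRing R] [IsDomain R]

set_option linter.unusedSectionVars false
set_option maxHeartbeats 1000000

local notation "alg" => algebraMap R (FractionRing R)

/-- The content ideal of a polynomial. -/
def cont (g : R[X]) : Ideal R := Ideal.span (Set.range g.coeff)

lemma coeff_mem_cont (g : R[X]) (i : ℕ) : g.coeff i ∈ cont g :=
  Ideal.subset_span ⟨i, rfl⟩

lemma cont_ne_bot {g : R[X]} (hg : g ≠ 0) : cont g ≠ ⊥ := by
  intro h
  apply hg
  ext i
  have := coeff_mem_cont g i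
  rw [h, Ideal.mem_bot] at this
  simp [this]

lemma cont_le_iff {g : R[X]} {I : Ideal R} : cont g ≤ I ↔ ∀ i, g.coeff i ∈ I := by
  constructor
  · intro h i; exact h (coeff_mem_cont g i)
  · intro h; rw [cont, Ideal.span_le]; rintro x ⟨i, rfl⟩; exact h i

lemma cont_le_iff_map_eq_zero {g : R[X]} {I : Ideal R} :
    cont g ≤ I ↔ g.map (Ideal.Quotient.mk I) = 0 := by
  rw [cont_le_iff, Polynomial.ext_iff]
  simp [coeff_map, Ideal.Quotient.eq_zero_iff_mem]

/-- The submonoid of polynomials with unit content ideal. -/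
def prim (R : Type u) [CommRing R] [IsDomain R] : Submonoid R[X] where
  carrier := {g | cont g = ⊤}
  one_mem' := by
    rw [Set.mem_setOf_eq, Ideal.eq_top_iff_one]
    simpa using coeff_mem_cont (1 : R[X]) 0
  mul_mem' := by
    intro p q hp hq
    rw [Set.mem_setOf_eq] at *
    by_contra hne
    obtain ⟨m, hm, hle⟩ := Ideal.exists_le_maximal _ hne
    have hprime : m.IsPrime := hm.isPrime
    rw [cont_le_iff_map_eq_zero, Polynomial.map_mul] at hle
    rcases mul_eq_zero.mp hle with h | h
    · have := cont_le_iff_map_eq_zero.mpr h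
      rw [hp, top_le_iff] at this
      exact hm.ne_top this
    · have := cont_le_iff_map_eq_zero.mpr h
      rw [hq, top_le_iff] at this
      exact hm.ne_top this

lemma mem_prim {g : R[X]} : g ∈ prim R ↔ cont g = ⊤ := Iff.rfl

lemma cont_zero : cont (0 : R[X]) = ⊥ := by
  rw [eq_bot_iff, cont, Ideal.span_le]
  rintro x ⟨i, rfl⟩
  simp [Ideal.mem_bot]

lemma prim_le_nonZeroDivisors : prim R ≤ nonZeroDivisors R[X] := by
  intro g hg
  apply mem_nonZeroDivisors_of_ne_zero
  rintro rfl
  have h0 := mem_prim.mp hg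
  rw [cont_zero] at h0
  exact absurd h0 bot_ne_top

lemma coeff_sum_monomial (s : Finset ℕ) (c : ℕ → R) (i : ℕ) :
    (∑ k ∈ s, monomial k (c k)).coeff i = if i ∈ s then c i else 0 := by
  rw [finset_sum_coeff]
  simp_rw [coeff_monomial]
  exact Finset.sum_ite_eq' s i c

variable [IsDedekindDomain R]

lemma exists_rep (I : Ideal R) (hI : I ≠ ⊥) :
    ∃ (n : ℕ) (a : Fin n → R) (b : Fin n → FractionRing R),
      (∀ j, a j ∈ I) ∧
      (∀ j, ∀ x ∈ I, ∃ t : R, alg t = b j * alg x) ∧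
      ∑ j, b j * alg (a j) = 1 := by
  have hne : (I : FractionalIdeal R⁰ (FractionRing R)) ≠ 0 :=
    FractionalIdeal.coeIdeal_ne_zero.mpr hI
  have hmul : (I : FractionalIdeal R⁰ (FractionRing R)) *
      (I : FractionalIdeal R⁰ (FractionRing R))⁻¹ = 1 :=
    mul_inv_cancel₀ hne
  have h1 : (1 : FractionRing R) ∈ ((I : FractionalIdeal R⁰ (FractionRing R)) *
      (I : FractionalIdeal R⁰ (FractionRing R))⁻¹) := by
    rw [hmul]
    exact (FractionalIdeal.mem_one_iff _).mpr ⟨1, map_one _⟩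
  rw [← FractionalIdeal.mem_coe, FractionalIdeal.coe_mul] at h1
  have key : ∀ z : FractionRing R,
      z ∈ ((I : FractionalIdeal R⁰ (FractionRing R)) : Submodule R (FractionRing R)) *
      (((I : FractionalIdeal R⁰ (FractionRing R))⁻¹ :
          FractionalIdeal R⁰ (FractionRing R)) : Submodule R (FractionRing R)) →
      ∃ (n : ℕ) (a : Fin n → R) (b : Fin n → FractionRing R),
        (∀ j, a j ∈ I) ∧
        (∀ j, ∀ x ∈ I, ∃ t : R, alg t = b j * alg x) ∧
        ∑ j, b j * alg (a j) = z := by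
    intro z hz
    refine Submodule.mul_induction_on hz ?_ ?_
    · intro m hm nn hn
      rw [FractionalIdeal.mem_coe, FractionalIdeal.mem_coeIdeal] at hm
      obtain ⟨a0, ha0, rfl⟩ := hm
      rw [FractionalIdeal.mem_coe] at hn
      refine ⟨1, fun _ => a0, fun _ => nn, fun _ => ha0, ?_, by simp [mul_comm]⟩
      intro j x hx
      have hx' : nn * alg x ∈ (1 : FractionalIdeal R⁰ (FractionRing R)) :=
        (FractionalIdeal.mem_inv_iff hne).mp hn _ (FractionalIdeal.mem_coeIdeal_of_mem _ hx)
      obtain ⟨t, ht⟩ := (FractionalIdeal.mem_one_iff _).mp hx'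
      exact ⟨t, ht⟩
    · rintro x y ⟨n₁, a₁, b₁, h₁, h₁', h₁s⟩ ⟨n₂, a₂, b₂, h₂, h₂', h₂s⟩
      refine ⟨n₁ + n₂, Fin.append a₁ a₂, Fin.append b₁ b₂, ?_, ?_, ?_⟩
      · intro j
        refine Fin.addCases (fun i => ?_) (fun i => ?_) j
        · rw [Fin.append_left]; exact h₁ i
        · rw [Fin.append_right]; exact h₂ i
      · intro j
        refine Fin.addCases (fun i => ?_) (fun i => ?_) j
        · rw [Fin.append_left]; exact h₁' i
        · rw [Fin.append_right]; exact h₂' i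
      · rw [Fin.sum_univ_add]
        simp only [Fin.append_left, Fin.append_right]
        rw [h₁s, h₂s]
  exact key 1 h1

/-- The key lemma: for any nonzero `g`, there is a polynomial `u` of unit content
such that every element `a` of the content of `g` satisfies `C a * u ∈ (g)`. -/
lemma exists_prim_mul (g : R[X]) (hg : g ≠ 0) :
    ∃ u : R[X], cont u = ⊤ ∧ ∀ a ∈ cont g, ∃ h : R[X], C a * u = g * h := by
  obtain ⟨n, a, b, haI, hb, hsum⟩ := exists_rep (cont g) (cont_ne_bot hg)
  have halg : Function.Injective (alg) := IsFractionRing.injective R (FractionRing R)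
  -- the pullback coefficients
  have hc : ∀ (j : Fin n) (i : ℕ), ∃ t : R, alg t = b j * alg (g.coeff i) :=
    fun j i => hb j _ (coeff_mem_cont g i)
  set c : Fin n → ℕ → R := fun j i => (hc j i).choose with hc_def
  have hcspec : ∀ j i, alg (c j i) = b j * alg (g.coeff i) := fun j i => (hc j i).choose_spec
  set p : Fin n → R[X] := fun j => ∑ k ∈ g.support, monomial k (c j k) with hp_def
  have hpcoeff : ∀ j i, (p j).coeff i = c j i := by
    intro j i
    rw [hp_def, coeff_sum_monomial]
    split_ifs with h
    · rfl
    · refine (halg ?_).symm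
      rw [hcspec, Polynomial.notMem_support_iff.mp h]
      simp
  set D : ℕ := g.natDegree + 1 with hD_def
  have hpD : ∀ (j : Fin n) (i : ℕ), D ≤ i → (p j).coeff i = 0 := by
    intro j i hi
    rw [hpcoeff]
    apply halg
    rw [hcspec, Polynomial.coeff_eq_zero_of_natDegree_lt (by omega)]
    simp
  set u : R[X] := ∑ j : Fin n, p j * X ^ ((j : ℕ) * D) with hu_def
  -- coefficients of u
  have hucoeff : ∀ (j : Fin n) (i : ℕ), i < D → u.coeff ((j : ℕ) * D + i) = (p j).coeff i := by
    intro j i hi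
    rw [hu_def, finset_sum_coeff]
    rw [Finset.sum_eq_single j]
    · rw [coeff_mul_X_pow']
      simp [Nat.le_add_right]
    · intro j' _ hj'
      rw [coeff_mul_X_pow']
      split_ifs with h
      · apply hpD
        have hne : (j' : ℕ) ≠ (j : ℕ) := fun hh => hj' (Fin.ext hh)
        rcases lt_or_gt_of_ne hne with hlt | hgt
        · have : (j' : ℕ) * D + D ≤ (j : ℕ) * D := by
            have : (j' : ℕ) + 1 ≤ (j : ℕ) := hlt
            calc (j' : ℕ) * D + D = ((j' : ℕ) + 1) * D := by ring
            _ ≤ (j : ℕ) * D := Nat.mul_le_mul_right D this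
          omega
        · exfalso
          have : (j : ℕ) * D + D ≤ (j' : ℕ) * D := by
            have : (j : ℕ) + 1 ≤ (j' : ℕ) := hgt
            calc (j : ℕ) * D + D = ((j : ℕ) + 1) * D := by ring
            _ ≤ (j' : ℕ) * D := Nat.mul_le_mul_right D this
          omega
      · rfl
    · intro h
      exact absurd (Finset.mem_univ j) h
  -- every coefficient of p j lies in cont u
  have hp_mem : ∀ (j : Fin n) (i : ℕ), (p j).coeff i ∈ cont u := by
    intro j i
    rcases lt_or_ge i D with h | h
    · rw [← hucoeff j i h]; exact coeff_mem_cont u _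
    · rw [hpD j i h]; exact (cont u).zero_mem
  refine ⟨u, ?_, ?_⟩
  · -- content of u is ⊤
    rw [Ideal.eq_top_iff_one]
    -- pull back 1 = ∑ b j * alg (a j)
    have ht : ∀ j : Fin n, ∃ t : R, alg t = b j * alg (a j) ∧ t ∈ cont u := by
      intro j
      have claim : ∀ x ∈ cont g, ∃ t : R, alg t = b j * alg x ∧ t ∈ cont u := by
        intro x hx
        refine Submodule.span_induction ?_ ?_ ?_ ?_ hx
        · rintro y ⟨i, rfl⟩
          refine ⟨c j i, hcspec j i, ?_⟩
          rw [← hpcoeff j i]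
          exact hp_mem j i
        · exact ⟨0, by simp, (cont u).zero_mem⟩
        · rintro y z _ _ ⟨t₁, ht₁, ht₁m⟩ ⟨t₂, ht₂, ht₂m⟩
          exact ⟨t₁ + t₂, by rw [map_add, ht₁, ht₂, map_add]; ring, Ideal.add_mem _ ht₁m ht₂m⟩
        · rintro r y _ ⟨t, htt, htm⟩
          refine ⟨r * t, ?_, Ideal.mul_mem_left _ _ htm⟩
          rw [map_mul, htt, smul_eq_mul, map_mul]; ring
      obtain ⟨t, htt, htm⟩ := claim (a j) (haI j)
      exact ⟨t, htt, htm⟩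
    choose t htspec htmem using ht
    have hsum' : ∑ j, t j = 1 := by
      apply halg
      rw [map_sum, map_one]
      rw [← hsum]
      exact Finset.sum_congr rfl fun j _ => htspec j
    rw [← hsum']
    exact Ideal.sum_mem _ fun j _ => htmem j
  · -- C a * u ∈ (g)
    intro x hx
    have hd : ∀ j : Fin n, ∃ d : R, alg d = b j * alg x := fun j => hb j x hx
    choose d hdspec using hd
    refine ⟨∑ j : Fin n, C (d j) * X ^ ((j : ℕ) * D), ?_⟩
    rw [hu_def, Finset.mul_sum, Finset.mul_sum]
    refine Finset.sum_congr rfl fun j _ => ?_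
    have hkey : C x * p j = g * C (d j) := by
      ext i
      rw [coeff_C_mul, coeff_mul_C]
      apply halg
      rw [map_mul, map_mul, hpcoeff, hcspec, hdspec]
      ring
    calc C x * (p j * X ^ ((j : ℕ) * D)) = (C x * p j) * X ^ ((j : ℕ) * D) := by ring
    _ = (g * C (d j)) * X ^ ((j : ℕ) * D) := by rw [hkey]
    _ = g * (C (d j) * X ^ ((j : ℕ) * D)) := by ring


local notation "S" => Localization (prim R)
local notation "algS" => algebraMap R[X] (Localization (prim R))

lemma algS_injective : Function.Injective (algS) :=
  IsLocalization.injective _ (prim_le_nonZeroDivisors (R := R))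

/-- Lemma B: the extension of `(g)` to the Nagata ring equals the extension of the
content ideal of `g`. -/
lemma map_span_singleton_eq (g : R[X]) :
    Ideal.map (algS) (Ideal.span {g}) =
      Ideal.map (algS) (Ideal.map (C : R →+* R[X]) (cont g)) := by
  rcases eq_or_ne g 0 with rfl | hg
  · rw [cont_zero, Ideal.map_bot, Ideal.map_bot, Set.singleton_zero, Ideal.span_zero,
      Ideal.map_bot]
  refine le_antisymm ?_ ?_
  · apply Ideal.map_mono
    rw [Ideal.span_le, Set.singleton_subset_iff]
    exact Ideal.polynomial_mem_ideal_of_coeff_mem_ideal _ g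
      (fun n => Ideal.le_comap_map (coeff_mem_cont g n))
  · rw [Ideal.map_le_iff_le_comap, Ideal.map_le_iff_le_comap]
    intro a ha
    rw [Ideal.mem_comap, Ideal.mem_comap]
    obtain ⟨u, hu, hex⟩ := exists_prim_mul g hg
    obtain ⟨h, hh⟩ := hex a ha
    have huu : IsUnit ((algS) u) := IsLocalization.map_units _ (⟨u, hu⟩ : prim R)
    rw [← Ideal.unit_mul_mem_iff_mem _ huu]
    have : (algS) u * (algS) (C a) = (algS) (g * h) := by
      rw [← map_mul, ← hh]; ring_nf
    rw [this, map_mul]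
    exact Ideal.mul_mem_right _ _ (Ideal.mem_map_of_mem _ (Ideal.mem_span_singleton_self g))

/-- The constant embedding into the Nagata ring. -/
noncomputable def fmap : R →+* Localization (prim R) := (algS).comp (C : R →+* R[X])

lemma fmap_comap_map (I : Ideal R) : Ideal.comap (fmap (R := R)) (Ideal.map (fmap (R := R)) I) = I := by
  refine le_antisymm ?_ Ideal.le_comap_map
  intro r hr
  rw [Ideal.mem_comap, fmap, ← Ideal.map_map] at hr
  have hr' : (algS) (C r) ∈ Ideal.map (algS) (Ideal.map (C : R →+* R[X]) I) := hr
  rw [IsLocalization.mem_map_algebraMap_iff (prim R)] at hr'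
  obtain ⟨⟨y, u⟩, hy⟩ := hr'
  rw [← map_mul] at hy
  have heq : C r * (u : R[X]) = (y : R[X]) := algS_injective hy
  have hmem : C r * (u : R[X]) ∈ Ideal.map (C : R →+* R[X]) I := heq ▸ y.2
  rw [Ideal.mem_map_C_iff] at hmem
  -- each coefficient r * u.coeff i ∈ I; content of u is ⊤
  have hcu : cont (u : R[X]) = ⊤ := u.2
  have h1 : (1 : R) ∈ cont (u : R[X]) := by rw [hcu]; trivial
  have key : ∀ x ∈ cont (u : R[X]), r * x ∈ I := by
    intro x hx
    refine Submodule.span_induction ?_ ?_ ?_ ?_ hx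
    · rintro y' ⟨i, rfl⟩
      have := hmem i
      rwa [coeff_C_mul] at this
    · simp
    · intro y' z _ _ hy' hz
      rw [mul_add]; exact Ideal.add_mem _ hy' hz
    · intro m y' _ hy'
      rw [smul_eq_mul, mul_comm m y', ← mul_assoc]
      exact Ideal.mul_mem_right _ _ hy'
  have := key 1 h1
  rwa [mul_one] at this

/-- Every ideal of the Nagata ring is extended from `R`. -/
lemma map_fmap_comap (J : Ideal (Localization (prim R))) :
    Ideal.map (fmap (R := R)) (Ideal.comap (fmap (R := R)) J) = J := by
  refine le_antisymm Ideal.map_comap_le ?_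
  conv_lhs => rw [← IsLocalization.map_comap (prim R) (Localization (prim R)) J]
  rw [Ideal.map_le_iff_le_comap]
  intro g hg
  rw [Ideal.mem_comap]
  have h1 : (algS) g ∈ Ideal.map (algS) (Ideal.span {g}) :=
    Ideal.mem_map_of_mem _ (Ideal.mem_span_singleton_self g)
  rw [map_span_singleton_eq, Ideal.map_map] at h1
  have h2 : Ideal.map ((algS).comp (C : R →+* R[X])) (cont g) ≤
      Ideal.map (fmap (R := R)) (Ideal.comap (fmap (R := R)) J) := by
    rw [fmap]
    apply Ideal.map_mono
    intro a ha
    rw [Ideal.mem_comap]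
    show ((algS).comp (C : R →+* R[X])) a ∈ J
    have h3 : (algS) (C a) ∈ Ideal.map (algS) (Ideal.map (C : R →+* R[X]) (cont g)) :=
      Ideal.mem_map_of_mem _ (Ideal.mem_map_of_mem _ ha)
    rw [← map_span_singleton_eq] at h3
    have h4 : Ideal.map (algS) (Ideal.span {g}) ≤ J := by
      rw [← IsLocalization.map_comap (prim R) (Localization (prim R)) J]
      apply Ideal.map_mono
      rw [Ideal.span_le, Set.singleton_subset_iff]
      exact hg
    exact h4 h3
  exact h2 h1

/-- Every ideal of `R` is the content of some polynomial. -/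
lemma exists_cont_eq (I : Ideal R) : ∃ g : R[X], cont g = I := by
  have hfg : I.FG := IsNoetherian.noetherian I
  obtain ⟨n, v, hv⟩ := Submodule.fg_iff_exists_fin_generating_family.mp hfg
  set w : ℕ → R := fun k => if h : k < n then v ⟨k, h⟩ else 0 with hw
  refine ⟨∑ k ∈ Finset.range n, monomial k (w k), ?_⟩
  rw [← hv]
  apply le_antisymm
  · rw [cont, Ideal.span_le]
    rintro x ⟨i, rfl⟩
    rw [coeff_sum_monomial]
    split_ifs with h
    · simp only [Finset.mem_range] at h
      show (if h' : i < n then v ⟨i, h'⟩ else 0) ∈ _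
      rw [dif_pos h]
      exact Submodule.subset_span ⟨⟨i, h⟩, rfl⟩
    · exact Submodule.zero_mem _
  · rw [Submodule.span_le]
    rintro x ⟨j, rfl⟩
    have : v j = (∑ k ∈ Finset.range n, monomial k (w k)).coeff j := by
      rw [coeff_sum_monomial, if_pos (Finset.mem_range.mpr j.isLt)]
      show _ = (if h' : (j : ℕ) < n then v ⟨j, h'⟩ else 0)
      rw [dif_pos j.isLt]
    rw [this]
    exact coeff_mem_cont _ _

lemma fmap_injective : Function.Injective (fmap (R := R)) :=
  algS_injective.comp Polynomial.C_injective

lemma fmap_not_surjective : ¬ Function.Surjective (fmap (R := R)) := by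
  intro hsurj
  obtain ⟨r, hr⟩ := hsurj ((algS) X)
  have : C r = X := algS_injective hr
  have h1 : (C r).coeff 1 = (X : R[X]).coeff 1 := by rw [this]
  rw [coeff_C, coeff_X_one] at h1
  simp at h1

lemma isPrincipal_of_ideal (J : Ideal (Localization (prim R))) : J.IsPrincipal := by
  obtain ⟨g, hg⟩ := exists_cont_eq (Ideal.comap (fmap (R := R)) J)
  refine ⟨(algS) g, ?_⟩
  have h1 : J = Ideal.map (fmap (R := R)) (cont g) := by
    rw [hg, map_fmap_comap]
  rw [h1, fmap, ← Ideal.map_map, ← map_span_singleton_eq, Ideal.map_span,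
    Set.image_singleton]

end NagataPID

open NagataPID in
/-- Every (nontrivial) Dedekind domain `R` has a proper ideal-preserving
extension that is a principal ideal domain: there are a PID `S` and an
injective, non-surjective ring homomorphism `f : R → S` such that `J ↦ f⁻¹(J)`
is a bijection from the ideals of `S` onto the ideals of `R`. -/
theorem dedekind_domain_ideal_preserving_pid_extension
    (R : Type u) [CommRing R] [IsDomain R] [IsDedekindDomain R] :
    ∃ (S : Type u) (_ : CommRing S),
      IsDomain S ∧ IsPrincipalIdealRing S ∧
      ∃ f : R →+* S,
        Function.Injective ⇑f ∧
        ¬ Function.Surjective ⇑f ∧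
        Function.Bijective (fun J : Ideal S => J.comap f) := by
  refine ⟨Localization (prim R), inferInstance, ?_, ?_, fmap, fmap_injective,
    fmap_not_surjective, ?_, ?_⟩
  · exact IsLocalization.isDomain_localization prim_le_nonZeroDivisors
  · exact ⟨fun J => isPrincipal_of_ideal J⟩
  · intro J₁ J₂ h
    simp only at h
    rw [← map_fmap_comap J₁, ← map_fmap_comap J₂, h]
  · intro I
    exact ⟨Ideal.map (fmap (R := R)) I, fmap_comap_map I⟩
end
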